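/- Let G be a countable group with sofic approximation 𝔖, and let T₁, T₂ be measure-preserving actions of G on standard probability spaces (X₁,μ₁), (X₂,μ₂). If T₁ is weakly contained in T₂ and T₂ is 𝔖-approximable, then T₁ is 𝔖-approximable. -/

import Mathlib

open Filter Topology
open scoped ENNReal
open MeasureTheory (Measure MeasurePreserving IsProbabilityMeasure)

namespace SoficPaper

/-- The normalized Hamming distance between two permutations of a (finite) set `V`. -/
noncomputable def hammingDist {V : Type*} (g₁ g₂ : Equiv.Perm V) : ℝ :=
  (Set.ncard {v | g₁ v ≠ g₂ v} : ℝ) / (Nat.card V : ℝ)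

/-- `γ` is an enumeration `(γ_i)_{i ≥ 1}` of the elements of `G`. -/
def IsEnumeration {G : Type*} (γ : ℕ → G) : Prop :=
  (∀ g : G, ∃ i : ℕ, 1 ≤ i ∧ γ i = g) ∧
  ∀ i j : ℕ, 1 ≤ i → 1 ≤ j → γ i = γ j → i = j

open scoped Classical in
/-- The metric on `A^G` (with `A` carrying the discrete metric):
`d(t₁,t₂) = sup_i (1/i) · d_A(t₁(γ_i), t₂(γ_i))`.  (The `i = 0` term vanishes since `1/0 = 0`.) -/
noncomputable def seqDist {G A : Type*} (γ : ℕ → G) (t₁ t₂ : G → A) : ℝ :=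
  ⨆ i : ℕ, (1 / (i : ℝ)) * (if t₁ (γ i) = t₂ (γ i) then 0 else 1)

/-- The Kantorovich distance between two (probability) measures on `A^G`:
the infimum of `∫ d dξ` over all couplings `ξ`.  It metrizes the weak* topology. -/
noncomputable def kantorovich {G A : Type*} [MeasurableSpace A] (γ : ℕ → G)
    (μ₁ μ₂ : Measure (G → A)) : ℝ :=
  sInf { r : ℝ | ∃ ξ : Measure ((G → A) × (G → A)), IsProbabilityMeasure ξ ∧
    ξ.map Prod.fst = μ₁ ∧ ξ.map Prod.snd = μ₂ ∧ r = ∫ p, seqDist γ p.1 p.2 ∂ξ }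

/-- The action of `G` on `X` is measure preserving for `μ`. -/
def IsPmpAction (G : Type*) [Group G] {X : Type*} [MeasurableSpace X] [MulAction G X]
    (μ : Measure X) : Prop :=
  ∀ g : G, MeasurePreserving (fun x : X => g • x) μ μ

/-- `f^G : X → A^G`, `f^G(x)(g) = f(g • x)`. -/
def obsG (G : Type*) [Group G] {X A : Type*} [MulAction G X] (f : X → A) : X → G → A :=
  fun x g => f (g • x)

/-- `distr(f) = (f^G)_* μ`. -/
noncomputable def distr (G : Type*) [Group G] {X A : Type*} [MeasurableSpace X]
    [MeasurableSpace A] [MulAction G X] (μ : Measure X) (f : X → A) : Measure (G → A) :=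
  μ.map (obsG G f)

/-- The metric on observables: `d(f₁,f₂) = μ {x | f₁ x ≠ f₂ x}`. -/
noncomputable def obsDist {X A : Type*} [MeasurableSpace X] (μ : Measure X)
    (f₁ f₂ : X → A) : ℝ :=
  (μ {x | f₁ x ≠ f₂ x}).toReal

/-- `θ_{v,σ} : A^V → A^G`, `θ_{v,σ}(τ)(g) = τ(σ^g(v))`. -/
def theta {G V A : Type*} (σ : G → Equiv.Perm V) (v : V) (τ : V → A) : G → A :=
  fun g => τ (σ g v)

/-- `Θ_σ(η) = (1/|V|) ∑_{v ∈ V} (θ_{v,σ})_* η`. -/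
noncomputable def Theta {G V A : Type*} [MeasurableSpace A] (σ : G → Equiv.Perm V)
    (η : Measure (V → A)) : Measure (G → A) :=
  (Nat.card V : ℝ≥0∞)⁻¹ • MeasureTheory.Measure.sum (fun v : V => η.map (theta σ v))

/-- `((V_i), (σ_i))` is a sofic approximation of `G`. -/
def IsSoficApprox {G : Type*} [Group G] {V : ℕ → Type*}
    (σ : ∀ i, G → Equiv.Perm (V i)) : Prop :=
  (∀ g₁ g₂ : G, g₁ ≠ g₂ →
      Tendsto (fun i => hammingDist (σ i g₁) (σ i g₂)) atTop (𝓝 1)) ∧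
  (∀ g₁ g₂ : G,
      Tendsto (fun i => hammingDist (σ i g₁ * σ i g₂) (σ i (g₁ * g₂))) atTop (𝓝 0))

/-- A group is sofic if it admits a sofic approximation. -/
def SoficGroup (G : Type*) [Group G] : Prop :=
  ∃ (V : ℕ → Type) (σ : ∀ i, G → Equiv.Perm (V i)), (∀ i, Finite (V i)) ∧ IsSoficApprox σ

/-- `σ : G → Sym(V)` is `k`-good with respect to the enumeration `γ`. -/
def kGood {G : Type*} [Group G] (γ : ℕ → G) {V : Type*} (σ : G → Equiv.Perm V)
    (k : ℕ) : Prop :=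
  (∀ i j : ℕ, 1 ≤ i → i < j → j ≤ k →
      hammingDist (σ (γ i)) (σ (γ j)) > 1 - 1 / (k : ℝ)) ∧
  (∀ i j : ℕ, 1 ≤ i → i ≤ k → 1 ≤ j → j ≤ k →
      hammingDist (σ (γ i) * σ (γ j)) (σ (γ i * γ j)) < 1 / (k : ℝ))

/-- The action is `𝔖`-approximable: every observable admits microstates along the
full sequence, with `Θ_{σ_i}(δ_{τ_i}) → distr f` in the weak* topology (metrized by
the Kantorovich distance). -/
def Approximable (G : Type*) [Group G] (γ : ℕ → G) {X : Type*} [MeasurableSpace X]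
    [MulAction G X] (μ : Measure X) {V : ℕ → Type}
    (σ : ∀ i, G → Equiv.Perm (V i)) : Prop :=
  ∀ (A : Type) [Fintype A] [MeasurableSpace A] [DiscreteMeasurableSpace A] (f : X → A),
    Measurable f → ∃ τ : ∀ i, V i → A,
      Tendsto (fun i => kantorovich γ (Theta (σ i) (MeasureTheory.Measure.dirac (τ i)))
        (distr G μ f)) atTop (𝓝 0)

/-- The action is `𝔖`-weakly approximable: every observable admits microstates along
some subsequence. -/
def WeaklyApproximable (G : Type*) [Group G] (γ : ℕ → G) {X : Type*} [MeasurableSpace X]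
    [MulAction G X] (μ : Measure X) {V : ℕ → Type}
    (σ : ∀ i, G → Equiv.Perm (V i)) : Prop :=
  ∀ (A : Type) [Fintype A] [MeasurableSpace A] [DiscreteMeasurableSpace A] (f : X → A),
    Measurable f → ∃ φ : ℕ → ℕ, StrictMono φ ∧ ∃ τ : ∀ j, V (φ j) → A,
      Tendsto (fun j => kantorovich γ (Theta (σ (φ j)) (MeasureTheory.Measure.dirac (τ j)))
        (distr G μ f)) atTop (𝓝 0)

/-- A pmp action is sofic if it is weakly approximable with respect to some sofic
approximation of `G`. -/
def SoficAction (G : Type*) [Group G] (γ : ℕ → G) {X : Type*} [MeasurableSpace X]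
    [MulAction G X] (μ : Measure X) : Prop :=
  ∃ (V : ℕ → Type) (σ : ∀ i, G → Equiv.Perm (V i)),
    (∀ i, Finite (V i)) ∧ IsSoficApprox σ ∧ WeaklyApproximable G γ μ σ

/-- Weak containment of pmp actions: every observable of the first action has its
distribution approximated by distributions of observables of the second action. -/
def WeaklyContained (G : Type*) [Group G] (γ : ℕ → G) {X₁ X₂ : Type*}
    [MeasurableSpace X₁] [MeasurableSpace X₂] [MulAction G X₁] [MulAction G X₂]
    (μ₁ : Measure X₁) (μ₂ : Measure X₂) : Prop :=
  ∀ (A : Type) [Fintype A] [MeasurableSpace A] [DiscreteMeasurableSpace A] (f₁ : X₁ → A),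
    Measurable f₁ → ∀ ε : ℝ, 0 < ε →
      ∃ f₂ : X₂ → A, Measurable f₂ ∧ kantorovich γ (distr G μ₂ f₂) (distr G μ₁ f₁) < ε

/-- A tower of observables on `(X, μ)`. -/
structure ObsTower {X : Type*} [MeasurableSpace X] (μ : Measure X) where
  A : ℕ → Type
  [fintypeA : ∀ i, Fintype (A i)]
  [measA : ∀ i, MeasurableSpace (A i)]
  [discA : ∀ i, DiscreteMeasurableSpace (A i)]
  f : ∀ i, X → A i
  measf : ∀ i, Measurable (f i)
  π : ∀ i j, j < i → A i → A j
  compat : ∀ i j (h : j < i), ∀ᵐ x ∂μ, π i j h (f i x) = f j x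
  π_comp : ∀ i j k (hij : i < j) (hjk : j < k),
    π j i hij ∘ π k j hjk = π k i (hij.trans hjk)

attribute [instance] ObsTower.fintypeA ObsTower.measA ObsTower.discA

/-- Sufficiency of a sequence of observables: every observable is approximated, up to
any `ε > 0`, by a post-composition of some member of the sequence. -/
def SufficientSeq {X : Type*} [MeasurableSpace X] (μ : Measure X) (A : ℕ → Type)
    (f : ∀ i, X → A i) : Prop :=
  ∀ (B : Type) [Fintype B] [MeasurableSpace B] [DiscreteMeasurableSpace B] (g : X → B),
    Measurable g → ∀ ε : ℝ, 0 < ε →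
      ∃ (i : ℕ) (π' : A i → B), (μ {x | π' (f i x) ≠ g x}).toReal < ε

/-- A sufficient tower of observables. -/
def ObsTower.Sufficient {X : Type*} [MeasurableSpace X] {μ : Measure X}
    (T : ObsTower μ) : Prop :=
  SufficientSeq μ T.A T.f

/-- A pmp action of `G` on a standard probability space, bundled. -/
structure PmpSystem (G : Type*) [Group G] where
  X : Type
  [mX : MeasurableSpace X]
  [act : MulAction G X]
  sb : StandardBorelSpace X
  μ : Measure X
  prob : IsProbabilityMeasure μ
  pmp : IsPmpAction G μ

attribute [instance] PmpSystem.mX PmpSystem.act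

/-- A universal sofic action: a sofic action weakly containing every sofic action. -/
def UniversalSoficAction (G : Type*) [Group G] (γ : ℕ → G) (S : PmpSystem G) : Prop :=
  SoficAction G γ S.μ ∧
  ∀ T : PmpSystem G, SoficAction G γ T.μ → WeaklyContained G γ T.μ S.μ

/-- A maximal sofic approximation: a sofic approximation with respect to which every
universal sofic action is approximable. -/
def MaximalSoficApprox (G : Type*) [Group G] (γ : ℕ → G) {V : ℕ → Type}
    (σ : ∀ i, G → Equiv.Perm (V i)) : Prop :=
  (∀ i, Finite (V i)) ∧ IsSoficApprox σ ∧
  ∀ S : PmpSystem G, UniversalSoficAction G γ S → Approximable G γ S.μ σ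

/-- The product of two measures on `ι → A`, viewed as a measure on `ι → A × A`. -/
noncomputable def pairMeasure {ι A : Type*} [MeasurableSpace A]
    (η₁ η₂ : Measure (ι → A)) : Measure (ι → A × A) :=
  (η₁.prod η₂).map (fun p i => (p.1 i, p.2 i))

/-- The action is strongly sofic (admits a doubly-quenched approximation) with respect
to `((V_i), (σ_i))`. -/
def StronglySofic (G : Type*) [Group G] (γ : ℕ → G) {X : Type*} [MeasurableSpace X]
    [MulAction G X] (μ : Measure X) {V : ℕ → Type}
    (σ : ∀ i, G → Equiv.Perm (V i)) : Prop :=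
  ∀ (A : Type) [Fintype A] [MeasurableSpace A] [DiscreteMeasurableSpace A] (f : X → A),
    Measurable f → ∃ η : ∀ i, Measure (V i → A),
      (∀ i, IsProbabilityMeasure (η i)) ∧
      Tendsto (fun i => kantorovich γ (Theta (σ i) (pairMeasure (η i) (η i)))
          (pairMeasure (distr G μ f) (distr G μ f))) atTop (𝓝 0) ∧
      ∀ ε : ℝ, 0 < ε →
        Tendsto (fun i => pairMeasure (η i) (η i)
            {ξ : V i → A × A | kantorovich γ (Theta (σ i) (MeasureTheory.Measure.dirac ξ))
              (pairMeasure (distr G μ f) (distr G μ f)) < ε})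
          atTop (𝓝 (1 : ℝ≥0∞))

section SeqDist
open scoped Classical

variable {G A : Type*} (γ : ℕ → G)

lemma seqDist_term_nonneg (t₁ t₂ : G → A) (i : ℕ) :
    0 ≤ (1 / (i : ℝ)) * (if t₁ (γ i) = t₂ (γ i) then 0 else 1) := by
  apply mul_nonneg (by positivity)
  split_ifs <;> norm_num

lemma seqDist_term_le_one (t₁ t₂ : G → A) (i : ℕ) :
    (1 / (i : ℝ)) * (if t₁ (γ i) = t₂ (γ i) then 0 else 1) ≤ 1 := by
  have h1 : (1 : ℝ) / (i : ℝ) ≤ 1 := by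
    rcases Nat.eq_zero_or_pos i with h | h
    · simp [h]
    · apply div_le_one_of_le₀
      · exact_mod_cast h
      · positivity
  split_ifs
  · simp
  · simpa using h1

lemma seqDist_bddAbove (t₁ t₂ : G → A) :
    BddAbove (Set.range fun i : ℕ => (1 / (i : ℝ)) * (if t₁ (γ i) = t₂ (γ i) then 0 else 1)) := by
  refine ⟨1, fun x hx => ?_⟩
  obtain ⟨i, rfl⟩ := hx
  exact seqDist_term_le_one γ t₁ t₂ i

lemma seqDist_nonneg (t₁ t₂ : G → A) : 0 ≤ seqDist γ t₁ t₂ := by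
  have h := le_ciSup (seqDist_bddAbove γ t₁ t₂) 0
  have h0 : (1 / ((0 : ℕ) : ℝ)) * (if t₁ (γ 0) = t₂ (γ 0) then 0 else 1) = 0 := by
    norm_num
  rw [seqDist]
  calc (0 : ℝ) = _ := h0.symm
    _ ≤ _ := h

lemma seqDist_triangle (t₁ t₂ t₃ : G → A) :
    seqDist γ t₁ t₃ ≤ seqDist γ t₁ t₂ + seqDist γ t₂ t₃ := by
  rw [seqDist]
  apply ciSup_le
  intro i
  by_cases h13 : t₁ (γ i) = t₃ (γ i)
  · rw [if_pos h13, mul_zero]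
    have := seqDist_nonneg γ t₁ t₂
    have := seqDist_nonneg γ t₂ t₃
    linarith
  · rw [if_neg h13, mul_one]
    have key : t₁ (γ i) ≠ t₂ (γ i) ∨ t₂ (γ i) ≠ t₃ (γ i) := by
      by_contra hc
      push_neg at hc
      exact h13 (hc.1.trans hc.2)
    rcases key with h | h
    · have h1 : (1 / (i : ℝ)) ≤ seqDist γ t₁ t₂ := by
        have := le_ciSup (seqDist_bddAbove γ t₁ t₂) i
        rwa [if_neg h, mul_one] at this
      have := seqDist_nonneg γ t₂ t₃
      linarith
    · have h1 : (1 / (i : ℝ)) ≤ seqDist γ t₂ t₃ := by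
        have := le_ciSup (seqDist_bddAbove γ t₂ t₃) i
        rwa [if_neg h, mul_one] at this
      have := seqDist_nonneg γ t₁ t₂
      linarith

lemma seqDist_le_one (t₁ t₂ : G → A) : seqDist γ t₁ t₂ ≤ 1 :=
  ciSup_le (seqDist_term_le_one γ t₁ t₂)

lemma measurable_seqDist [MeasurableSpace A] [MeasurableSingletonClass A] [Countable A] :
    Measurable (fun p : (G → A) × (G → A) => seqDist γ p.1 p.2) := by
  unfold seqDist
  apply Measurable.iSup
  intro i
  apply Measurable.const_mul
  have hE : MeasurableSet {p : (G → A) × (G → A) | p.1 (γ i) = p.2 (γ i)} :=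
    measurableSet_eq_fun (measurable_fst.eval) (measurable_snd.eval)
  have : (fun p : (G → A) × (G → A) => if p.1 (γ i) = p.2 (γ i) then (0:ℝ) else 1)
      = fun p => Set.indicator {p : (G → A) × (G → A) | ¬ p.1 (γ i) = p.2 (γ i)}
        (fun _ => (1:ℝ)) p := by
    ext p
    by_cases h : p.1 (γ i) = p.2 (γ i) <;> simp [h]
  rw [this]
  exact (measurable_const.indicator hE.compl)

end SeqDist

section Kant
open scoped Classical
open MeasureTheory ProbabilityTheory

variable {G A : Type*} [Countable G] [MeasurableSpace A]
  [MeasurableSingletonClass A] [Countable A] (γ : ℕ → G)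

/-- The set of coupling costs appearing in the definition of `kantorovich`. -/
def kantSet (μ₁ μ₂ : Measure (G → A)) : Set ℝ :=
  { r : ℝ | ∃ ξ : Measure ((G → A) × (G → A)), IsProbabilityMeasure ξ ∧
    ξ.map Prod.fst = μ₁ ∧ ξ.map Prod.snd = μ₂ ∧ r = ∫ p, seqDist γ p.1 p.2 ∂ξ }

lemma kantorovich_eq (μ₁ μ₂ : Measure (G → A)) :
    kantorovich γ μ₁ μ₂ = sInf (kantSet γ μ₁ μ₂) := rfl

lemma kantSet_nonneg {μ₁ μ₂ : Measure (G → A)} {x : ℝ} (hx : x ∈ kantSet γ μ₁ μ₂) : 0 ≤ x := by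
  obtain ⟨ξ, hP, -, -, rfl⟩ := hx
  exact MeasureTheory.integral_nonneg fun p => seqDist_nonneg γ p.1 p.2

lemma kantSet_bddBelow (μ₁ μ₂ : Measure (G → A)) : BddBelow (kantSet γ μ₁ μ₂) :=
  ⟨0, fun x hx => kantSet_nonneg γ hx⟩

lemma kantorovich_nonneg (μ₁ μ₂ : Measure (G → A)) : 0 ≤ kantorovich γ μ₁ μ₂ :=
  Real.sInf_nonneg fun _ hx => kantSet_nonneg γ hx

lemma kantorovich_le_of_mem {μ₁ μ₂ : Measure (G → A)} {x : ℝ} (hx : x ∈ kantSet γ μ₁ μ₂) :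
    kantorovich γ μ₁ μ₂ ≤ x :=
  csInf_le (kantSet_bddBelow γ μ₁ μ₂) hx

lemma kantSet_nonempty (μ₁ μ₂ : Measure (G → A)) [IsProbabilityMeasure μ₁]
    [IsProbabilityMeasure μ₂] : (kantSet γ μ₁ μ₂).Nonempty := by
  refine ⟨_, μ₁.prod μ₂, inferInstance, ?_, ?_, rfl⟩
  · exact Measure.fst_prod
  · exact Measure.snd_prod

/-- Integrability of bounded measurable functions on finite measure spaces. -/
lemma integrable_of_bounded_01 {α : Type*} [MeasurableSpace α] (ν : Measure α)
    [MeasureTheory.IsFiniteMeasure ν] {h : α → ℝ} (hm : Measurable h)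
    (h0 : ∀ x, 0 ≤ h x) (h1 : ∀ x, h x ≤ 1) : MeasureTheory.Integrable h ν := by
  refine ⟨hm.aestronglyMeasurable, ?_⟩
  apply MeasureTheory.HasFiniteIntegral.of_bounded (C := 1)
  filter_upwards with x
  rw [Real.norm_eq_abs, abs_of_nonneg (h0 x)]
  exact h1 x

/-- The triangle inequality for the Kantorovich distance on probability measures. -/
lemma kantorovich_triangle [Nonempty A] (p q r : Measure (G → A)) [IsProbabilityMeasure p]
    [IsProbabilityMeasure q] [IsProbabilityMeasure r] :
    kantorovich γ p r ≤ kantorovich γ p q + kantorovich γ q r := by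
  refine le_of_forall_pos_le_add fun ε hε => ?_
  have hmeas : Measurable fun x : (G → A) × (G → A) => seqDist γ x.1 x.2 := measurable_seqDist γ
  -- choose near-optimal couplings
  obtain ⟨x₁, hx₁, hlt₁⟩ := exists_lt_of_csInf_lt (kantSet_nonempty γ p q)
    (show sInf (kantSet γ p q) < kantorovich γ p q + ε / 2 by
      rw [← kantorovich_eq]; linarith)
  obtain ⟨ξ₁, hξ₁P, hξ₁f, hξ₁s, rfl⟩ := hx₁
  obtain ⟨x₂, hx₂, hlt₂⟩ := exists_lt_of_csInf_lt (kantSet_nonempty γ q r)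
    (show sInf (kantSet γ q r) < kantorovich γ q r + ε / 2 by
      rw [← kantorovich_eq]; linarith)
  obtain ⟨ξ₂, hξ₂P, hξ₂f, hξ₂s, rfl⟩ := hx₂
  -- glue the couplings via disintegration
  set κ : Kernel (G → A) (G → A) := ξ₂.condKernel with hκdef
  set κ' : Kernel ((G → A) × (G → A)) (G → A) :=
    κ.comap (Prod.snd : (G → A) × (G → A) → (G → A)) measurable_snd with hκ'def
  set m : Measure (((G → A) × (G → A)) × (G → A)) := ξ₁.compProd κ' with hmdef
  haveI : IsProbabilityMeasure m := by infer_instance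
  set ψ : ((G → A) × (G → A)) × (G → A) → (G → A) × (G → A) := fun x => (x.1.2, x.2) with hψdef
  have hψ : Measurable ψ := (measurable_snd.comp measurable_fst).prodMk measurable_snd
  set φ : ((G → A) × (G → A)) × (G → A) → (G → A) × (G → A) := fun x => (x.1.1, x.2) with hφdef
  have hφ : Measurable φ := (measurable_fst.comp measurable_fst).prodMk measurable_snd
  have h_fst : m.map Prod.fst = ξ₁ := Measure.fst_compProd ξ₁ κ'
  have h_mid : m.map ψ = ξ₂ := by
    ext s hs
    rw [Measure.map_apply hψ hs, Measure.compProd_apply (hψ hs)]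
    have hcongr : ∀ ab : (G → A) × (G → A),
        κ' ab (Prod.mk ab ⁻¹' (ψ ⁻¹' s)) = κ ab.2 (Prod.mk ab.2 ⁻¹' s) := by
      intro ab
      rw [hκ'def, Kernel.comap_apply]
      rfl
    rw [MeasureTheory.lintegral_congr hcongr]
    have hker : Measurable fun b : G → A => κ b (Prod.mk b ⁻¹' s) :=
      Kernel.measurable_kernel_prodMk_left hs
    have : ∫⁻ ab : (G → A) × (G → A), κ ab.2 (Prod.mk ab.2 ⁻¹' s) ∂ξ₁
        = ∫⁻ b, κ b (Prod.mk b ⁻¹' s) ∂(ξ₁.map Prod.snd) :=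
      (lintegral_map hker measurable_snd).symm
    rw [this, hξ₁s]
    have hd : ξ₂.fst.compProd κ = ξ₂ := ξ₂.disintegrate κ
    conv_rhs => rw [← hd]
    rw [Measure.compProd_apply hs]
    rw [show ξ₂.fst = q from hξ₂f]
  -- the glued coupling
  set Ξ : Measure ((G → A) × (G → A)) := m.map φ with hΞdef
  haveI : IsProbabilityMeasure Ξ := MeasureTheory.Measure.isProbabilityMeasure_map hφ.aemeasurable
  have hΞf : Ξ.map Prod.fst = p := by
    rw [hΞdef, Measure.map_map measurable_fst hφ]
    have : (Prod.fst ∘ φ) = (Prod.fst ∘ (Prod.fst : ((G → A) × (G → A)) × (G → A) → _)) := rfl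
    rw [this, ← Measure.map_map measurable_fst measurable_fst, h_fst, hξ₁f]
  have hΞs : Ξ.map Prod.snd = r := by
    rw [hΞdef, Measure.map_map measurable_snd hφ]
    have : (Prod.snd ∘ φ) = (Prod.snd ∘ ψ) := rfl
    rw [this, ← Measure.map_map measurable_snd hψ, h_mid, hξ₂s]
  -- integrability
  have int13 : MeasureTheory.Integrable (fun x => seqDist γ x.1.1 x.2) m :=
    integrable_of_bounded_01 m (hmeas.comp hφ) (fun x => seqDist_nonneg γ _ _)
      (fun x => seqDist_le_one γ _ _)
  have int12 : MeasureTheory.Integrable (fun x => seqDist γ x.1.1 x.1.2) m :=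
    integrable_of_bounded_01 m (hmeas.comp measurable_fst) (fun x => seqDist_nonneg γ _ _)
      (fun x => seqDist_le_one γ _ _)
  have int23 : MeasureTheory.Integrable (fun x => seqDist γ x.1.2 x.2) m :=
    integrable_of_bounded_01 m (hmeas.comp hψ) (fun x => seqDist_nonneg γ _ _)
      (fun x => seqDist_le_one γ _ _)
  -- cost computations
  have hcost : (∫ x, seqDist γ x.1 x.2 ∂Ξ) = ∫ x, seqDist γ x.1.1 x.2 ∂m := by
    rw [hΞdef]
    exact MeasureTheory.integral_map hφ.aemeasurable hmeas.aestronglyMeasurable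
  have hcost12 : (∫ x, seqDist γ x.1.1 x.1.2 ∂m) = ∫ x, seqDist γ x.1 x.2 ∂ξ₁ := by
    rw [← h_fst]
    exact (MeasureTheory.integral_map measurable_fst.aemeasurable
      hmeas.aestronglyMeasurable).symm
  have hcost23 : (∫ x, seqDist γ x.1.2 x.2 ∂m) = ∫ x, seqDist γ x.1 x.2 ∂ξ₂ := by
    rw [← h_mid]
    exact (MeasureTheory.integral_map hψ.aemeasurable hmeas.aestronglyMeasurable).symm
  have hmono : (∫ x, seqDist γ x.1.1 x.2 ∂m)
      ≤ (∫ x, seqDist γ x.1.1 x.1.2 ∂m) + ∫ x, seqDist γ x.1.2 x.2 ∂m := by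
    rw [← MeasureTheory.integral_add int12 int23]
    exact MeasureTheory.integral_mono int13 (int12.add int23)
      (fun x => seqDist_triangle γ _ _ _)
  have hmem : (∫ x, seqDist γ x.1 x.2 ∂Ξ) ∈ kantSet γ p r := ⟨Ξ, inferInstance, hΞf, hΞs, rfl⟩
  have := kantorovich_le_of_mem γ hmem
  rw [hcost] at this
  rw [hcost12, hcost23] at hmono
  linarith

end Kant

section ThetaLemmas
open MeasureTheory

lemma measurable_theta {G V A : Type*} [MeasurableSpace A] (σ : G → Equiv.Perm V) (v : V) :
    Measurable (theta σ v : (V → A) → (G → A)) :=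
  measurable_pi_lambda _ fun g => measurable_pi_apply _

lemma Theta_of_isEmpty {G V A : Type*} [MeasurableSpace A] [IsEmpty V]
    (σ : G → Equiv.Perm V) (η : Measure (V → A)) : Theta σ η = 0 := by
  unfold Theta
  have : MeasureTheory.Measure.sum (fun v : V => η.map (theta σ v)) = 0 := by
    ext s hs
    rw [Measure.sum_apply _ hs]
    rw [tsum_eq_sum (s := (∅ : Finset V)) (fun b _ => (IsEmpty.false b).elim)]
    simp
  rw [this]
  simp

lemma isProbabilityMeasure_Theta_dirac {G V A : Type*} [MeasurableSpace A] [Finite V]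
    [Nonempty V] (σ : G → Equiv.Perm V) (τ : V → A) :
    IsProbabilityMeasure (Theta σ (MeasureTheory.Measure.dirac τ)) := by
  constructor
  haveI := Fintype.ofFinite V
  rw [Theta, Measure.smul_apply, Measure.sum_apply _ MeasurableSet.univ]
  have hv : ∀ v : V, ((MeasureTheory.Measure.dirac τ).map (theta σ v)) Set.univ = 1 := by
    intro v
    rw [Measure.map_apply (measurable_theta σ v) MeasurableSet.univ]
    simp
  rw [tsum_congr hv, tsum_eq_sum (s := Finset.univ) (by simp)]
  rw [Finset.sum_const, Finset.card_univ, nsmul_eq_mul, mul_one]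
  rw [smul_eq_mul, Nat.card_eq_fintype_card]
  exact ENNReal.inv_mul_cancel (by simp [Fintype.card_ne_zero]) (by simp)

lemma measurable_obsG {G X A : Type*} [Group G] [MeasurableSpace X] [MeasurableSpace A]
    [MulAction G X] {μ : Measure X} {f : X → A} (hf : Measurable f)
    (hact : IsPmpAction G μ) : Measurable (obsG G f) :=
  measurable_pi_lambda _ fun g => hf.comp (hact g).measurable

lemma isProbabilityMeasure_distr {G X A : Type*} [Group G] [MeasurableSpace X]
    [MeasurableSpace A] [MulAction G X] (μ : Measure X) [IsProbabilityMeasure μ]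
    {f : X → A} (hf : Measurable f) (hact : IsPmpAction G μ) :
    IsProbabilityMeasure (distr G μ f) :=
  MeasureTheory.Measure.isProbabilityMeasure_map (measurable_obsG hf hact).aemeasurable

lemma kantorovich_theta_empty {G V A : Type*} [MeasurableSpace A] [IsEmpty V]
    (γ : ℕ → G) (σ : G → Equiv.Perm V) (η : Measure (V → A)) (ν : Measure (G → A)) :
    kantorovich γ (Theta σ η) ν = 0 := by
  have hempty : { r : ℝ | ∃ ξ : Measure ((G → A) × (G → A)), IsProbabilityMeasure ξ ∧
      ξ.map Prod.fst = Theta σ η ∧ ξ.map Prod.snd = ν ∧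
      r = ∫ p, seqDist γ p.1 p.2 ∂ξ } = ∅ := by
    rw [Set.eq_empty_iff_forall_notMem]
    rintro x ⟨ξ, hP, hfst, -, -⟩
    have h1 : (ξ.map Prod.fst) Set.univ = 1 := by
      rw [Measure.map_apply measurable_fst MeasurableSet.univ]
      simp
    rw [hfst, Theta_of_isEmpty] at h1
    simp at h1
  rw [kantorovich, hempty, Real.sInf_empty]

end ThetaLemmas

/-- If `T₁` is weakly contained in `T₂` and `T₂` is
`𝔖`-approximable, then `T₁` is `𝔖`-approximable. -/

theorem weaklyContained_approximable {G : Type*} [Group G] [Countable G]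
    (γ : ℕ → G) (hγ : IsEnumeration γ)
    {X₁ X₂ : Type*} [MeasurableSpace X₁] [MeasurableSpace X₂]
    [StandardBorelSpace X₁] [StandardBorelSpace X₂] [MulAction G X₁] [MulAction G X₂]
    (μ₁ : Measure X₁) (μ₂ : Measure X₂)
    [IsProbabilityMeasure μ₁] [IsProbabilityMeasure μ₂]
    (hact₁ : IsPmpAction G μ₁) (hact₂ : IsPmpAction G μ₂)
    {V : ℕ → Type} (hfin : ∀ i, Finite (V i)) (σ : ∀ i, G → Equiv.Perm (V i))
    (hσ : IsSoficApprox σ)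
    (hwc : WeaklyContained G γ μ₁ μ₂) (happx : Approximable G γ μ₂ σ) :
    Approximable G γ μ₁ σ := by
  intro A _ _ _ f hf
  haveI : ∀ i, Finite (V i) := hfin
  haveI hXne : Nonempty X₁ := by
    by_contra h
    haveI := not_nonempty_iff.mp h
    have h1 : μ₁ Set.univ = 1 := MeasureTheory.measure_univ
    rw [Set.univ_eq_empty_iff.mpr this] at h1
    simp at h1
  haveI : Nonempty A := ⟨f (Classical.arbitrary X₁)⟩
  haveI : IsProbabilityMeasure (distr G μ₁ f) := isProbabilityMeasure_distr μ₁ hf hact₁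
  -- approximating observables on X₂
  have h1 : ∀ n : ℕ, ∃ f₂ : X₂ → A, Measurable f₂ ∧
      kantorovich γ (distr G μ₂ f₂) (distr G μ₁ f) < 1 / ((n : ℝ) + 1) :=
    fun n => hwc A f hf (1 / ((n : ℝ) + 1)) (by positivity)
  choose f₂ hf₂m hf₂d using h1
  have h2 := fun n => happx A (f₂ n) (hf₂m n)
  choose τ' hτ' using h2
  haveI : ∀ n, IsProbabilityMeasure (distr G μ₂ (f₂ n)) :=
    fun n => isProbabilityMeasure_distr μ₂ (hf₂m n) hact₂
  -- thresholds
  have h3 : ∀ n : ℕ, ∃ M : ℕ, ∀ i ≥ M,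
      kantorovich γ (Theta (σ i) (MeasureTheory.Measure.dirac (τ' n i)))
        (distr G μ₂ (f₂ n)) < 1 / ((n : ℝ) + 1) := by
    intro n
    have := Metric.tendsto_atTop.mp (hτ' n) (1 / ((n : ℝ) + 1)) (by positivity)
    obtain ⟨M, hM⟩ := this
    refine ⟨M, fun i hi => ?_⟩
    have := hM i hi
    rw [Real.dist_eq, sub_zero] at this
    exact lt_of_le_of_lt (le_abs_self _) this
  choose M hM using h3
  -- strictly increasing thresholds
  set N : ℕ → ℕ := fun n => Nat.rec (M 0) (fun n ih => max (ih + 1) (M (n + 1))) n with hNdef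
  have hN0 : N 0 = M 0 := rfl
  have hNsucc : ∀ n, N (n + 1) = max (N n + 1) (M (n + 1)) := fun n => rfl
  have hNM : ∀ n, M n ≤ N n := by
    intro n
    cases n with
    | zero => exact le_of_eq hN0.symm
    | succ n => rw [hNsucc]; exact le_max_right _ _
  -- the diagonal sequence
  set ψ : ℕ → ℕ := fun i => Nat.findGreatest (fun n => N n ≤ i) i with hψdef
  refine ⟨fun i => τ' (ψ i) i, ?_⟩
  rw [Metric.tendsto_atTop]
  intro ε hε
  obtain ⟨n, hn⟩ := exists_nat_gt (2 / ε)
  have hn' : (2 : ℝ) / ((n : ℝ) + 1) < ε := by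
    rw [div_lt_iff₀ (by positivity)]
    have h2e : (2 : ℝ) < ((n : ℝ) + 1) * ε := by
      rw [← div_lt_iff₀ hε] at *
      linarith
    linarith [h2e]
  refine ⟨max (N n) n, fun i hi => ?_⟩
  have hiN : N n ≤ i := le_trans (le_max_left _ _) hi
  have hin : n ≤ i := le_trans (le_max_right _ _) hi
  have hψge : n ≤ ψ i := Nat.le_findGreatest hin hiN
  have hψspec : N (ψ i) ≤ i := by
    rcases Nat.eq_zero_or_pos (ψ i) with h | h
    · rw [h]
      calc N 0 ≤ N n := by
            clear * -
            induction n with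
            | zero => exact le_rfl
            | succ n ih => exact le_trans ih (le_trans (Nat.le_succ _) (le_max_left _ _))
        _ ≤ i := hiN
    · exact Nat.findGreatest_spec (P := fun n => N n ≤ i) hin hiN
  set K := kantorovich γ (Theta (σ i) (MeasureTheory.Measure.dirac (τ' (ψ i) i)))
    (distr G μ₁ f) with hKdef
  have hK0 : 0 ≤ K := kantorovich_nonneg γ _ _
  rw [Real.dist_eq, sub_zero, abs_of_nonneg hK0]
  -- case on whether V i is empty
  rcases isEmpty_or_nonempty (V i) with hVe | hVne
  · rw [hKdef, kantorovich_theta_empty]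
    exact hε
  · haveI : IsProbabilityMeasure (Theta (σ i) (MeasureTheory.Measure.dirac (τ' (ψ i) i))) :=
      isProbabilityMeasure_Theta_dirac (σ i) (τ' (ψ i) i)
    have htri := kantorovich_triangle γ
      (Theta (σ i) (MeasureTheory.Measure.dirac (τ' (ψ i) i)))
      (distr G μ₂ (f₂ (ψ i))) (distr G μ₁ f)
    have hk : kantorovich γ (Theta (σ i) (MeasureTheory.Measure.dirac (τ' (ψ i) i)))
        (distr G μ₂ (f₂ (ψ i))) < 1 / ((ψ i : ℝ) + 1) :=
      hM (ψ i) i (le_trans (hNM (ψ i)) hψspec)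
    have hc : kantorovich γ (distr G μ₂ (f₂ (ψ i))) (distr G μ₁ f)
        < 1 / ((ψ i : ℝ) + 1) := hf₂d (ψ i)
    have hmono : (1 : ℝ) / ((ψ i : ℝ) + 1) ≤ 1 / ((n : ℝ) + 1) := by
      apply one_div_le_one_div_of_le (by positivity)
      have : (n : ℝ) ≤ (ψ i : ℝ) := by exact_mod_cast hψge
      linarith
    calc K ≤ _ + _ := htri
      _ < 1 / ((ψ i : ℝ) + 1) + 1 / ((ψ i : ℝ) + 1) := by linarith
      _ ≤ 1 / ((n : ℝ) + 1) + 1 / ((n : ℝ) + 1) := by linarith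
      _ = 2 / ((n : ℝ) + 1) := by ring
      _ < ε := hn'

end SoficPaper
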